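/- arXiv:1801.07347 — 5 statements merged into one kernel-verified Lean document; each statement's English description precedes it below -/
import Mathlib

section
/- Full-Duplex Transceiver mode probability (Theorem 1, eq. (6)): the probability that a uniformly chosen user's requested content is cached by some other user while at least one other user requests the content it caches equals (1/N)·Σ_{κ=1}^{N} (P_hit−ρ_κ)(1−(1−ρ_κ)^{N−1}). Precisely, (1/N)·Σ_{κ=1}^{N} P( X_κ ≤ N, X_κ ≠ κ, and X_μ = κ for some μ ≠ κ ) = (1/N)·Σ_{κ=1}^{N} (P_hit−ρ_κ)(1−(1−ρ_κ)^{N−1}). -/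
open MeasureTheory ProbabilityTheory Finset

/-- Theorem 1, eq. (6): Full-Duplex Transceiver mode probability. -/
theorem FDTR_mode_probability
    {Ω : Type*} [MeasurableSpace Ω] (P : Measure Ω) [IsProbabilityMeasure P]
    (N m : ℕ) (hN : 1 ≤ N) (hm : N ≤ m)
    (X : ℕ → Ω → ℕ) (ρ : ℕ → ℝ)
    (hmeas : ∀ μ, Measurable (X μ))
    (hrange : ∀ μ ∈ Finset.Icc 1 N, ∀ ω, X μ ω ∈ Finset.Icc 1 m)
    (hindep : iIndepFun
      (fun i : Fin N => X (i.val + 1)) P)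
    (hdist : ∀ μ ∈ Finset.Icc 1 N, ∀ ℓ ∈ Finset.Icc 1 m,
      P {ω | X μ ω = ℓ} = ENNReal.ofReal (ρ ℓ))
    (hρ : ∀ ℓ ∈ Finset.Icc 1 m, 0 ≤ ρ ℓ)
    (hρsum : ∑ ℓ ∈ Finset.Icc 1 m, ρ ℓ = 1) :
    (1 / N : ℝ) * ∑ κ ∈ Finset.Icc 1 N,
        (P {ω | X κ ω ≤ N ∧ X κ ω ≠ κ ∧ (∃ μ ∈ Finset.Icc 1 N, μ ≠ κ ∧ X μ ω = κ)}).toReal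
      = (1 / N : ℝ) * ∑ κ ∈ Finset.Icc 1 N, ((∑ j ∈ Finset.Icc 1 N, ρ j) - ρ κ) * (1 - (1 - ρ κ) ^ (N - 1)) := by
  congr 1
  refine Finset.sum_congr rfl fun κ hκ => ?_
  obtain ⟨hκ1, hκN⟩ := Finset.mem_Icc.mp hκ
  have hκm : κ ∈ Finset.Icc 1 m := Finset.mem_Icc.mpr ⟨hκ1, le_trans hκN hm⟩
  have hρκ0 : 0 ≤ ρ κ := hρ κ hκm
  have hρκ1 : ρ κ ≤ 1 := hρsum ▸ Finset.single_le_sum (fun ℓ hℓ => hρ ℓ hℓ) hκm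
  set κ0 : Fin N := ⟨κ - 1, by omega⟩ with hκ0def
  have hκ0v : κ0.val + 1 = κ := by simp only [hκ0def]; omega
  set T : Set ℕ := {n | 1 ≤ n ∧ n ≤ N ∧ n ≠ κ} with hTdef
  set s : Fin N → Set Ω :=
    fun i => X (i.val + 1) ⁻¹' (if i = κ0 then T else {κ}ᶜ) with hsdef
  -- membership of indices
  have hmemIcc : ∀ i : Fin N, i.val + 1 ∈ Finset.Icc 1 N :=
    fun i => Finset.mem_Icc.mpr ⟨by omega, by omega⟩
  -- measurability of each s i
  have hsm : ∀ i, MeasurableSet (s i) :=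
    fun i => (hmeas _) ((Set.to_countable _).measurableSet)
  -- independence gives product formula
  have hD : P (⋂ i, s i) = ∏ i, P (s i) :=
    hindep.meas_iInter fun i => ⟨_, (Set.to_countable _).measurableSet, rfl⟩
  -- measure of s κ0
  have hsk : s κ0 = X κ ⁻¹' T := by rw [hsdef]; simp [hκ0v]
  have hAunion : X κ ⁻¹' T = ⋃ j ∈ (Finset.Icc 1 N).erase κ, X κ ⁻¹' {j} := by
    ext ω
    simp only [Set.mem_preimage, hTdef, Set.mem_setOf_eq, Set.mem_iUnion,
      Finset.mem_erase, Finset.mem_Icc, Set.mem_singleton_iff]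
    constructor
    · rintro ⟨h1, h2, h3⟩; exact ⟨X κ ω, ⟨h3, h1, h2⟩, rfl⟩
    · rintro ⟨j, ⟨h3, h1, h2⟩, rfl⟩; exact ⟨h1, h2, h3⟩
  have hPA : P (X κ ⁻¹' T)
      = ENNReal.ofReal (∑ j ∈ (Finset.Icc 1 N).erase κ, ρ j) := by
    rw [hAunion, measure_biUnion_finset ?_ (fun j _ => (hmeas κ) (measurableSet_singleton j))]
    · rw [ENNReal.ofReal_sum_of_nonneg
        (fun j hj => hρ j (Finset.mem_Icc.mpr
          (by have := Finset.mem_Icc.mp (Finset.mem_of_mem_erase hj); omega)))]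
      refine Finset.sum_congr rfl fun j hj => ?_
      have hjm : j ∈ Finset.Icc 1 m := Finset.mem_Icc.mpr
        (by have := Finset.mem_Icc.mp (Finset.mem_of_mem_erase hj); omega)
      rw [← hdist κ hκ j hjm]; rfl
    · intro j _ k _ hjk
      exact Set.disjoint_left.mpr fun ω h1 h2 => hjk (by
        simp only [Set.mem_preimage, Set.mem_singleton_iff] at h1 h2
        omega)
  -- measure of s i for i ≠ κ0
  have hsi : ∀ i : Fin N, i ≠ κ0 → P (s i) = 1 - ENNReal.ofReal (ρ κ) := by
    intro i hi
    have : s i = (X (i.val + 1) ⁻¹' {κ})ᶜ := by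
      rw [hsdef]; simp only [if_neg hi]; rw [Set.preimage_compl]
    rw [this, measure_compl ((hmeas _) (measurableSet_singleton κ)) (measure_ne_top P _),
      measure_univ]
    congr 1
    rw [← hdist (i.val + 1) (hmemIcc i) κ hκm]; rfl
  -- abbreviations
  set a : ℝ := ∑ j ∈ (Finset.Icc 1 N).erase κ, ρ j with hadef
  have ha0 : 0 ≤ a := Finset.sum_nonneg fun j hj => hρ j (Finset.mem_Icc.mpr
    (by have := Finset.mem_Icc.mp (Finset.mem_of_mem_erase hj); omega))
  have haeq : a = (∑ j ∈ Finset.Icc 1 N, ρ j) - ρ κ := Finset.sum_erase_eq_sub hκ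
  -- product computation
  have hprod : P (⋂ i, s i) = ENNReal.ofReal (a * (1 - ρ κ) ^ (N - 1)) := by
    rw [hD, ← Finset.mul_prod_erase Finset.univ _ (Finset.mem_univ κ0)]
    rw [hsk, hPA]
    have : ∏ i ∈ Finset.univ.erase κ0, P (s i)
        = (1 - ENNReal.ofReal (ρ κ)) ^ (N - 1) := by
      rw [Finset.prod_congr rfl (fun i hi => hsi i (Finset.ne_of_mem_erase hi)),
        Finset.prod_const, Finset.card_erase_of_mem (Finset.mem_univ κ0),
        Finset.card_univ, Fintype.card_fin]
    rw [this, show (1 : ENNReal) - ENNReal.ofReal (ρ κ) = ENNReal.ofReal (1 - ρ κ) by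
      rw [ENNReal.ofReal_sub _ hρκ0, ENNReal.ofReal_one]]
    rw [← ENNReal.ofReal_pow (by linarith), ← ENNReal.ofReal_mul ha0]
  -- the event equals A \ ⋂ s i
  have hE : {ω | X κ ω ≤ N ∧ X κ ω ≠ κ ∧ (∃ μ ∈ Finset.Icc 1 N, μ ≠ κ ∧ X μ ω = κ)}
      = (X κ ⁻¹' T) \ (⋂ i, s i) := by
    ext ω
    have h1 : 1 ≤ X κ ω := (Finset.mem_Icc.mp (hrange κ hκ ω)).1
    simp only [Set.mem_setOf_eq, Set.mem_diff, Set.mem_preimage, Set.mem_iInter,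
      hTdef, Set.mem_setOf_eq, Finset.mem_Icc]
    constructor
    · rintro ⟨h2, h3, μ, ⟨hμ1, hμN⟩, hne, hXμ⟩
      refine ⟨⟨h1, h2, h3⟩, fun hall => ?_⟩
      have hi := hall ⟨μ - 1, by omega⟩
      have hne0 : (⟨μ - 1, by omega⟩ : Fin N) ≠ κ0 := by
        simp only [hκ0def, Ne, Fin.mk.injEq]; omega
      rw [hsdef] at hi
      simp only [if_neg hne0, Set.mem_preimage, Set.mem_compl_iff,
        Set.mem_singleton_iff] at hi
      have : μ - 1 + 1 = μ := by omega
      rw [this] at hi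
      exact hi hXμ
    · rintro ⟨⟨h1', h2, h3⟩, hnot⟩
      refine ⟨h2, h3, ?_⟩
      push_neg at hnot
      obtain ⟨i, hi⟩ := hnot
      by_cases hieq : i = κ0
      · exfalso
        apply hi
        rw [hsdef]
        simp only [hieq, if_pos rfl, Set.mem_preimage, hκ0v]
        exact ⟨h1', h2, h3⟩
      · rw [hsdef] at hi
        simp only [if_neg hieq, Set.mem_preimage, Set.mem_compl_iff,
          Set.mem_singleton_iff, not_not] at hi
        refine ⟨i.val + 1, Finset.mem_Icc.mp (hmemIcc i), ?_, hi⟩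
        intro h
        apply hieq
        apply Fin.ext
        simp only [hκ0def]
        omega
  -- conclude
  have hsub : (⋂ i, s i) ⊆ X κ ⁻¹' T := hsk ▸ Set.iInter_subset s κ0
  have hfin : P (⋂ i, s i) ≠ ⊤ := measure_ne_top P _
  have hle : P (⋂ i, s i) ≤ P (X κ ⁻¹' T) := measure_mono hsub
  rw [hE, measure_diff hsub (MeasurableSet.iInter hsm).nullMeasurableSet hfin,
    ENNReal.toReal_sub_of_le hle (measure_ne_top P _), hPA, hprod,
    ENNReal.toReal_ofReal ha0,
    ENNReal.toReal_ofReal (mul_nonneg ha0 (pow_nonneg (by linarith) _)),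
    haeq]
  ring
end

section
/- Three-Node Full-Duplex mode probability (Theorem 1, eq. (8)): the probability that a uniformly chosen user's requested content is cached by another user (its serving node), at least one further user requests the content it caches, and the serving node itself does not request its content, equals (1/N)·Σ_{κ=1}^{N} (P_hit−ρ_κ)(1−ρ_κ−(1−ρ_κ)^{N−1}). Precisely, (1/N)·Σ_{κ=1}^{N} P( X_κ ≤ N, X_κ ≠ κ, X_{X_κ} ≠ κ, and X_μ = κ for some μ ≠ κ ) = (1/N)·Σ_{κ=1}^{N} (P_hit−ρ_κ)(1−ρ_κ−(1−ρ_κ)^{N−1}). -/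
open MeasureTheory ProbabilityTheory Finset

/-- Theorem 1, eq. (8): Three-Node Full-Duplex mode probability. -/
theorem TNFD_mode_probability
    {Ω : Type*} [MeasurableSpace Ω] (P : Measure Ω) [IsProbabilityMeasure P]
    (N m : ℕ) (hN : 1 ≤ N) (hm : N ≤ m)
    (X : ℕ → Ω → ℕ) (ρ : ℕ → ℝ)
    (hmeas : ∀ μ, Measurable (X μ))
    (hrange : ∀ μ ∈ Finset.Icc 1 N, ∀ ω, X μ ω ∈ Finset.Icc 1 m)
    (hindep : iIndepFun
      (fun i : Fin N => X (i.val + 1)) P)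
    (hdist : ∀ μ ∈ Finset.Icc 1 N, ∀ ℓ ∈ Finset.Icc 1 m,
      P {ω | X μ ω = ℓ} = ENNReal.ofReal (ρ ℓ))
    (hρ : ∀ ℓ ∈ Finset.Icc 1 m, 0 ≤ ρ ℓ)
    (hρsum : ∑ ℓ ∈ Finset.Icc 1 m, ρ ℓ = 1) :
    (1 / N : ℝ) * ∑ κ ∈ Finset.Icc 1 N,
        (P {ω | X κ ω ≤ N ∧ X κ ω ≠ κ ∧ X (X κ ω) ω ≠ κ ∧ (∃ μ ∈ Finset.Icc 1 N, μ ≠ κ ∧ X μ ω = κ)}).toReal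
      = (1 / N : ℝ) * ∑ κ ∈ Finset.Icc 1 N, ((∑ j ∈ Finset.Icc 1 N, ρ j) - ρ κ) * (1 - ρ κ - (1 - ρ κ) ^ (N - 1)) := by
  have hmemN : ∀ i ∈ Finset.Icc 1 N, i ∈ Finset.Icc 1 m := by
    intro i hi; simp only [Finset.mem_Icc] at *; omega
  have hρ1 : ∀ κ ∈ Finset.Icc 1 N, ρ κ ≤ 1 := by
    intro κ hκ
    calc ρ κ ≤ ∑ ℓ ∈ Finset.Icc 1 m, ρ ℓ :=
          Finset.single_le_sum (fun i hi => hρ i hi) (hmemN κ hκ)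
      _ = 1 := hρsum
  -- Independence reformulated over natural-number indices in [1, N].
  have hind : ∀ (s : Finset ℕ), (∀ i ∈ s, i ∈ Finset.Icc 1 N) → ∀ g : ℕ → Set ℕ,
      P (⋂ i ∈ s, X i ⁻¹' g i) = ∏ i ∈ s, P (X i ⁻¹' g i) := by
    intro s hs g
    set f : ℕ → Fin N := fun i => if h : i - 1 < N then ⟨i - 1, h⟩ else ⟨0, by omega⟩ with hf
    have hfval : ∀ i ∈ s, (f i).val + 1 = i := by
      intro i hi
      have hi' := hs i hi
      simp only [Finset.mem_Icc] at hi'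
      have h : i - 1 < N := by omega
      simp only [hf, dif_pos h]
      omega
    have hinj : ∀ i ∈ s, ∀ j ∈ s, f i = f j → i = j := by
      intro i hi j hj hij
      have h1 := hfval i hi
      have h2 := hfval j hj
      have : (f i).val = (f j).val := by rw [hij]
      omega
    have key : (⋂ i' ∈ s.image f, X (i'.val + 1) ⁻¹' g (i'.val + 1)) = ⋂ i ∈ s, X i ⁻¹' g i := by
      ext ω
      simp only [Set.mem_iInter, Finset.mem_image]
      constructor
      · intro h i hi
        have := h (f i) ⟨i, hi, rfl⟩
        rwa [hfval i hi] at this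
      · rintro h i' ⟨i, hi, rfl⟩
        rw [hfval i hi]; exact h i hi
    have keyP : ∏ i' ∈ s.image f, P (X (i'.val + 1) ⁻¹' g (i'.val + 1)) = ∏ i ∈ s, P (X i ⁻¹' g i) := by
      rw [Finset.prod_image hinj]
      exact Finset.prod_congr rfl fun i hi => by rw [hfval i hi]
    rw [← key, ← keyP]
    exact hindep.meas_biInter (fun i' _ => ⟨g (i'.val + 1), MeasurableSet.of_discrete, rfl⟩)
  -- per-κ computation
  have hmain : ∀ κ ∈ Finset.Icc 1 N,
      (P {ω | X κ ω ≤ N ∧ X κ ω ≠ κ ∧ X (X κ ω) ω ≠ κ ∧ (∃ μ ∈ Finset.Icc 1 N, μ ≠ κ ∧ X μ ω = κ)}).toReal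
        = ((∑ j ∈ Finset.Icc 1 N, ρ j) - ρ κ) * (1 - ρ κ - (1 - ρ κ) ^ (N - 1)) := by
    intro κ hκ
    have hκm : κ ∈ Finset.Icc 1 m := hmemN κ hκ
    have hρκ0 : 0 ≤ ρ κ := hρ κ hκm
    have hρκ1 : ρ κ ≤ 1 := hρ1 κ hκ
    set T : Finset ℕ := (Finset.Icc 1 N).erase κ with hT
    -- event decomposition
    have hEvent :
        {ω | X κ ω ≤ N ∧ X κ ω ≠ κ ∧ X (X κ ω) ω ≠ κ ∧ (∃ μ ∈ Finset.Icc 1 N, μ ≠ κ ∧ X μ ω = κ)}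
        = ⋃ j ∈ T, ((X κ ⁻¹' {j} ∩ X j ⁻¹' {κ}ᶜ) ∩ ⋃ μ ∈ T.erase j, X μ ⁻¹' {κ}) := by
      ext ω
      constructor
      · rintro ⟨h1, h2, h3, μ, hμ, hμκ, hμX⟩
        have hXκ := hrange κ hκ ω
        simp only [Finset.mem_Icc] at hXκ
        have hjmem : X κ ω ∈ T := by
          rw [hT, Finset.mem_erase]
          exact ⟨h2, by simp only [Finset.mem_Icc]; omega⟩
        have hμj : μ ≠ X κ ω := fun h => h3 (h ▸ hμX)
        refine Set.mem_iUnion₂.2 ⟨X κ ω, hjmem, ⟨rfl, h3⟩, ?_⟩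
        refine Set.mem_iUnion₂.2 ⟨μ, ?_, hμX⟩
        rw [Finset.mem_erase, hT, Finset.mem_erase]
        exact ⟨hμj, hμκ, hμ⟩
      · intro hω
        obtain ⟨j, hjT, ⟨hXj, hXjc⟩, hB⟩ := Set.mem_iUnion₂.1 hω
        obtain ⟨μ, hμmem, hμX⟩ := Set.mem_iUnion₂.1 hB
        rw [Set.mem_preimage, Set.mem_singleton_iff] at hXj hμX
        rw [Set.mem_preimage, Set.mem_compl_iff, Set.mem_singleton_iff] at hXjc
        rw [hT, Finset.mem_erase] at hjT
        rw [Finset.mem_erase, hT, Finset.mem_erase] at hμmem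
        obtain ⟨hjκ, hjN⟩ := hjT
        have hjN' := hjN
        simp only [Finset.mem_Icc] at hjN'
        exact ⟨by omega, by rw [hXj]; exact hjκ, by rw [hXj]; exact hXjc,
          μ, hμmem.2.2, hμmem.2.1, hμX⟩
    rw [hEvent]
    -- disjointness and measurability for biUnion
    have hdisj : (↑T : Set ℕ).PairwiseDisjoint
        (fun j => (X κ ⁻¹' {j} ∩ X j ⁻¹' {κ}ᶜ) ∩ ⋃ μ ∈ T.erase j, X μ ⁻¹' {κ}) := by
      intro a _ b _ hab
      refine Set.disjoint_left.2 ?_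
      rintro ω ⟨⟨ha, -⟩, -⟩ ⟨⟨hb, -⟩, -⟩
      exact hab (by rw [Set.mem_preimage, Set.mem_singleton_iff] at ha hb; rw [← ha, ← hb])
    have hmeasA : ∀ j ∈ T, MeasurableSet
        ((X κ ⁻¹' {j} ∩ X j ⁻¹' {κ}ᶜ) ∩ ⋃ μ ∈ T.erase j, X μ ⁻¹' {κ}) := by
      intro j _
      refine (((hmeas κ) .of_discrete).inter ((hmeas j) .of_discrete)).inter ?_
      exact Finset.measurableSet_biUnion _ (fun μ _ => (hmeas μ) .of_discrete)
    rw [measure_biUnion_finset hdisj hmeasA]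
    -- per-j probability
    have hsingle : ∀ i ∈ Finset.Icc 1 N, ∀ ℓ ∈ Finset.Icc 1 m,
        P (X i ⁻¹' {ℓ}) = ENNReal.ofReal (ρ ℓ) := by
      intro i hi ℓ hℓ
      have := hdist i hi ℓ hℓ
      convert this using 2
      rfl
    have hcomp : ∀ i ∈ Finset.Icc 1 N,
        P (X i ⁻¹' {κ}ᶜ) = ENNReal.ofReal (1 - ρ κ) := by
      intro i hi
      have : X i ⁻¹' {κ}ᶜ = (X i ⁻¹' {κ})ᶜ := rfl
      rw [this, prob_compl_eq_one_sub ((hmeas i) .of_discrete), hsingle i hi κ hκm,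
        ENNReal.ofReal_sub 1 hρκ0, ENNReal.ofReal_one]
    have hTcard : T.card = N - 1 := by
      rw [hT, Finset.card_erase_of_mem hκ, Nat.card_Icc]
      omega
    have hterm : ∀ j ∈ T,
        (P ((X κ ⁻¹' {j} ∩ X j ⁻¹' {κ}ᶜ) ∩ ⋃ μ ∈ T.erase j, X μ ⁻¹' {κ}))
          = ENNReal.ofReal (ρ j * (1 - ρ κ) - ρ j * (1 - ρ κ) ^ (N - 1)) := by
      intro j hj
      have hjT := hj
      rw [hT, Finset.mem_erase] at hjT
      obtain ⟨hjκ, hjN⟩ := hjT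
      have hjm : j ∈ Finset.Icc 1 m := hmemN j hjN
      have hρj0 : 0 ≤ ρ j := hρ j hjm
      have hN2 : 2 ≤ N := by
        simp only [Finset.mem_Icc] at hjN hκ
        omega
      set g : ℕ → Set ℕ := fun i => if i = κ then {j} else {κ}ᶜ with hg
      have hgκ' : g κ = {j} := by simp [hg]
      have hgj' : ∀ i, i ≠ κ → g i = {κ}ᶜ := by intro i hi; simp [hg, hi]
      -- the "no further request" part as a full intersection
      set C : Set Ω := X κ ⁻¹' {j} ∩ X j ⁻¹' {κ}ᶜ with hC
      set B : Set Ω := ⋃ μ ∈ T.erase j, X μ ⁻¹' {κ} with hB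
      have hPC : P C = ENNReal.ofReal (ρ j) * ENNReal.ofReal (1 - ρ κ) := by
        have hCi : C = ⋂ i ∈ ({κ, j} : Finset ℕ), X i ⁻¹' g i := by
          rw [hC, Finset.set_biInter_insert, Finset.set_biInter_singleton, hgκ', hgj' j hjκ]
        have hsub : ∀ i ∈ ({κ, j} : Finset ℕ), i ∈ Finset.Icc 1 N := by
          intro i hi
          simp only [Finset.mem_insert, Finset.mem_singleton] at hi
          rcases hi with rfl | rfl
          exacts [hκ, hjN]
        rw [hCi, hind _ hsub g,
          Finset.prod_insert (by simp [hjκ.symm]), Finset.prod_singleton,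
          hgκ', hgj' j hjκ, hsingle κ hκ j hjm, hcomp j hjN]
      have hPD : P (C \ B) = ENNReal.ofReal (ρ j) * ENNReal.ofReal (1 - ρ κ) ^ (N - 1) := by
        have hDi : C \ B = ⋂ i ∈ Finset.Icc 1 N, X i ⁻¹' g i := by
          ext ω
          constructor
          · rintro ⟨⟨h1, h2⟩, h3⟩
            refine Set.mem_iInter₂.2 fun i hi => ?_
            rw [Set.mem_preimage]
            by_cases hiκ : i = κ
            · subst hiκ; rw [hgκ']; exact h1
            · rw [hgj' i hiκ]
              by_cases hij : i = j
              · subst hij; exact h2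
              · rw [Set.mem_compl_iff, Set.mem_singleton_iff]
                intro hcon
                refine h3 (Set.mem_iUnion₂.2 ⟨i, ?_, hcon⟩)
                rw [Finset.mem_erase, hT, Finset.mem_erase]
                exact ⟨hij, hiκ, hi⟩
          · intro h
            have hm := Set.mem_iInter₂.1 h
            have h1 : ω ∈ X κ ⁻¹' {j} := by have := hm κ hκ; rwa [Set.mem_preimage, hgκ'] at this
            have h2 : ω ∈ X j ⁻¹' {κ}ᶜ := by have := hm j hjN; rwa [Set.mem_preimage, hgj' j hjκ] at this
            refine ⟨⟨h1, h2⟩, ?_⟩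
            intro hB'
            obtain ⟨i, himem, hcon⟩ := Set.mem_iUnion₂.1 hB'
            rw [Finset.mem_erase, hT, Finset.mem_erase] at himem
            have hii := hm i himem.2.2
            rw [Set.mem_preimage, hgj' i himem.2.1, Set.mem_compl_iff] at hii
            exact hii hcon
        rw [hDi, hind _ (fun i hi => hi) g]
        have : (Finset.Icc 1 N) = insert κ T := by
          rw [hT, Finset.insert_erase hκ]
        rw [this, Finset.prod_insert (Finset.notMem_erase κ _)]
        have hgκ : P (X κ ⁻¹' g κ) = ENNReal.ofReal (ρ j) := by
          rw [hgκ']; exact hsingle κ hκ j hjm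
        have hrest : ∏ i ∈ T, P (X i ⁻¹' g i) = ENNReal.ofReal (1 - ρ κ) ^ (N - 1) := by
          rw [← hTcard, ← Finset.prod_const]
          refine Finset.prod_congr rfl fun i hi => ?_
          have hiT := hi
          rw [hT, Finset.mem_erase] at hiT
          rw [hgj' i hiT.1]
          exact hcomp i hiT.2
        rw [hgκ, hrest]
      have hBsub : C ∩ B ⊆ C := Set.inter_subset_left
      have hBmeas : MeasurableSet B := by
        rw [hB]
        exact Finset.measurableSet_biUnion _ (fun μ _ => (hmeas μ) .of_discrete)
      have hsplit : P (C ∩ B) + P (C \ B) = P C := measure_inter_add_diff C hBmeas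
      have hPA : P (C ∩ B) = P C - P (C \ B) :=
        ENNReal.eq_sub_of_add_eq (measure_ne_top P _) hsplit
      have hb1 : (0:ℝ) ≤ 1 - ρ κ := by linarith
      have hble : ρ j * (1 - ρ κ) ^ (N - 1) ≤ ρ j * (1 - ρ κ) := by
        refine mul_le_mul_of_nonneg_left ?_ hρj0
        calc (1 - ρ κ) ^ (N - 1) ≤ (1 - ρ κ) ^ 1 :=
              pow_le_pow_of_le_one hb1 (by linarith) (by omega)
          _ = 1 - ρ κ := pow_one _
      rw [hPA, hPC, hPD, ← ENNReal.ofReal_pow hb1, ← ENNReal.ofReal_mul hρj0,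
        ← ENNReal.ofReal_mul hρj0, ← ENNReal.ofReal_sub _ (by positivity)]
    rw [Finset.sum_congr rfl hterm]
    rw [ENNReal.toReal_sum (fun j _ => ENNReal.ofReal_ne_top)]
    have hterm' : ∀ j ∈ T,
        (ENNReal.ofReal (ρ j * (1 - ρ κ) - ρ j * (1 - ρ κ) ^ (N - 1))).toReal
          = ρ j * ((1 - ρ κ) - (1 - ρ κ) ^ (N - 1)) := by
      intro j hj
      have hjT := hj
      rw [hT, Finset.mem_erase] at hjT
      obtain ⟨hjκ, hjN⟩ := hjT
      have hρj0 : 0 ≤ ρ j := hρ j (hmemN j hjN)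
      have hb1 : (0:ℝ) ≤ 1 - ρ κ := by linarith
      have hble : ρ j * (1 - ρ κ) ^ (N - 1) ≤ ρ j * (1 - ρ κ) := by
        refine mul_le_mul_of_nonneg_left ?_ hρj0
        have hN2 : 2 ≤ N := by
          simp only [Finset.mem_Icc] at hjN hκ
          omega
        calc (1 - ρ κ) ^ (N - 1) ≤ (1 - ρ κ) ^ 1 :=
              pow_le_pow_of_le_one hb1 (by linarith) (by omega)
          _ = 1 - ρ κ := pow_one _
      rw [ENNReal.toReal_ofReal (by linarith)]
      ring
    rw [Finset.sum_congr rfl hterm', ← Finset.sum_mul]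
    have hTsum : ∑ j ∈ T, ρ j = (∑ j ∈ Finset.Icc 1 N, ρ j) - ρ κ := by
      have := Finset.add_sum_erase (Finset.Icc 1 N) ρ hκ
      rw [hT]; linarith
    rw [hTsum]
  rw [Finset.sum_congr rfl hmain]
end

section
/- Half-Duplex Receiver mode probability (Theorem 1, eq. (9)): the probability that a uniformly chosen user's requested content is cached by some other user while no user requests the content it caches equals (1/N)·Σ_{κ=1}^{N} (P_hit−ρ_κ)(1−ρ_κ)^{N−1}. Precisely, (1/N)·Σ_{κ=1}^{N} P( X_κ ≤ N, X_κ ≠ κ, and X_μ ≠ κ for all μ ≠ κ ) = (1/N)·Σ_{κ=1}^{N} (P_hit−ρ_κ)(1−ρ_κ)^{N−1}. -/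
open MeasureTheory ProbabilityTheory Finset

lemma prob_mem_finset {Ω : Type*} [MeasurableSpace Ω] (P : Measure Ω)
    (X : Ω → ℕ) (hX : Measurable X) (ρ : ℕ → ℝ) (m : ℕ)
    (hd : ∀ ℓ ∈ Finset.Icc 1 m, P {ω | X ω = ℓ} = ENNReal.ofReal (ρ ℓ))
    (hρ : ∀ ℓ ∈ Finset.Icc 1 m, 0 ≤ ρ ℓ)
    (T : Finset ℕ) (hT : T ⊆ Finset.Icc 1 m) :
    P (X ⁻¹' ↑T) = ENNReal.ofReal (∑ ℓ ∈ T, ρ ℓ) := by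
  have h1 : X ⁻¹' ↑T = ⋃ ℓ ∈ T, X ⁻¹' {ℓ} := by ext ω; simp
  rw [h1, measure_biUnion_finset]
  · rw [ENNReal.ofReal_sum_of_nonneg (fun ℓ hℓ => hρ ℓ (hT hℓ))]
    refine Finset.sum_congr rfl fun ℓ hℓ => ?_
    have := hd ℓ (hT hℓ)
    simpa [Set.preimage, Set.setOf_eq_eq_singleton'] using this
  · intro a _ b _ hab
    refine Set.disjoint_left.2 fun ω h1 h2 => hab ?_
    simp only [Set.mem_preimage, Set.mem_singleton_iff] at h1 h2
    rw [← h1, ← h2]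
  · exact fun ℓ _ => hX (measurableSet_singleton ℓ)

/-- Theorem 1, eq. (9): Half-Duplex Receiver mode probability. -/
theorem HDRX_mode_probability
    {Ω : Type*} [MeasurableSpace Ω] (P : Measure Ω) [IsProbabilityMeasure P]
    (N m : ℕ) (hN : 1 ≤ N) (hm : N ≤ m)
    (X : ℕ → Ω → ℕ) (ρ : ℕ → ℝ)
    (hmeas : ∀ μ, Measurable (X μ))
    (hrange : ∀ μ ∈ Finset.Icc 1 N, ∀ ω, X μ ω ∈ Finset.Icc 1 m)
    (hindep : iIndepFun
      (fun i : Fin N => X (i.val + 1)) P)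
    (hdist : ∀ μ ∈ Finset.Icc 1 N, ∀ ℓ ∈ Finset.Icc 1 m,
      P {ω | X μ ω = ℓ} = ENNReal.ofReal (ρ ℓ))
    (hρ : ∀ ℓ ∈ Finset.Icc 1 m, 0 ≤ ρ ℓ)
    (hρsum : ∑ ℓ ∈ Finset.Icc 1 m, ρ ℓ = 1) :
    (1 / N : ℝ) * ∑ κ ∈ Finset.Icc 1 N,
        (P {ω | X κ ω ≤ N ∧ X κ ω ≠ κ ∧ (∀ μ ∈ Finset.Icc 1 N, μ ≠ κ → X μ ω ≠ κ)}).toReal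
      = (1 / N : ℝ) * ∑ κ ∈ Finset.Icc 1 N, ((∑ j ∈ Finset.Icc 1 N, ρ j) - ρ κ) * (1 - ρ κ) ^ (N - 1) := by
  congr 1
  refine Finset.sum_congr rfl fun κ hκ => ?_
  have hκ1 : 1 ≤ κ := (Finset.mem_Icc.mp hκ).1
  have hκN : κ ≤ N := (Finset.mem_Icc.mp hκ).2
  have hκm : κ ∈ Finset.Icc 1 m := Finset.mem_Icc.mpr ⟨hκ1, hκN.trans hm⟩
  -- the per-user target finsets
  set T : ℕ → Finset ℕ := fun μ =>
    if μ = κ then (Finset.Icc 1 N).erase κ else (Finset.Icc 1 m).erase κ with hT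
  have hTsub : ∀ μ, T μ ⊆ Finset.Icc 1 m := by
    intro μ
    by_cases h : μ = κ <;> simp [hT, h]
    · exact (Finset.erase_subset _ _).trans (Finset.Icc_subset_Icc_right hm)
    · exact Finset.erase_subset _ _
  -- rewrite the event as an intersection
  have hset : {ω | X κ ω ≤ N ∧ X κ ω ≠ κ ∧ (∀ μ ∈ Finset.Icc 1 N, μ ≠ κ → X μ ω ≠ κ)}
      = ⋂ i : Fin N, X (i.val + 1) ⁻¹' ↑(T (i.val + 1)) := by
    ext ω
    simp only [Set.mem_setOf_eq, Set.mem_iInter, Set.mem_preimage, Finset.coe_insert,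
      Finset.mem_coe]
    constructor
    · rintro ⟨h1, h2, h3⟩ i
      by_cases h : i.val + 1 = κ
      · have hr := hrange κ hκ ω
        simp only [hT, h, if_pos rfl, Finset.mem_erase, Finset.mem_Icc]
        exact ⟨h2, (Finset.mem_Icc.mp hr).1, h1⟩
      · have hi : i.val + 1 ∈ Finset.Icc 1 N := Finset.mem_Icc.mpr ⟨Nat.le_add_left 1 _, i.isLt⟩
        have hr := hrange _ hi ω
        simp only [hT, if_neg h, Finset.mem_erase]
        exact ⟨h3 _ hi h, hr⟩
    · intro h
      have hκ' : X κ ω ≤ N ∧ X κ ω ≠ κ := by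
        have := h ⟨κ - 1, by omega⟩
        simp only [hT] at this
        rw [Nat.sub_add_cancel hκ1] at this
        simp only [eq_self_iff_true, if_true, Finset.mem_erase, Finset.mem_Icc] at this
        exact ⟨this.2.2, this.1⟩
      refine ⟨hκ'.1, hκ'.2, fun μ hμ hne => ?_⟩
      have hμ1 : 1 ≤ μ := (Finset.mem_Icc.mp hμ).1
      have hμN : μ ≤ N := (Finset.mem_Icc.mp hμ).2
      have := h ⟨μ - 1, by omega⟩
      simp only [hT] at this
      rw [Nat.sub_add_cancel hμ1] at this
      rw [if_neg hne] at this
      exact (Finset.mem_erase.mp this).1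
  rw [hset]
  rw [hindep.meas_iInter (fun i => ⟨↑(T (i.val + 1)), (T (i.val + 1)).measurableSet, rfl⟩)]
  -- compute each factor
  have hfac : ∀ i : Fin N, P (X (i.val + 1) ⁻¹' ↑(T (i.val + 1)))
      = ENNReal.ofReal (∑ ℓ ∈ T (i.val + 1), ρ ℓ) := by
    intro i
    have hi : i.val + 1 ∈ Finset.Icc 1 N := Finset.mem_Icc.mpr ⟨Nat.le_add_left 1 _, i.isLt⟩
    exact prob_mem_finset P _ (hmeas _) ρ m (hdist _ hi) hρ _ (hTsub _)
  simp only [hfac]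
  -- reindex the product over Icc 1 N
  have hprod : ∀ (f : ℕ → ENNReal), ∏ i : Fin N, f (i.val + 1) = ∏ μ ∈ Finset.Icc 1 N, f μ := by
    intro f
    rw [Fin.prod_univ_eq_prod_range (fun i => f (i + 1)) N]
    rw [show Finset.Icc 1 N = Finset.Ico 1 (N + 1) by rw [Finset.Ico_add_one_right_eq_Icc],
      Finset.prod_Ico_eq_prod_range]
    simp [add_comm]
  rw [hprod (fun μ => ENNReal.ofReal (∑ ℓ ∈ T μ, ρ ℓ))]
  -- sums over the target sets
  have hρκ : (0:ℝ) ≤ ρ κ := hρ κ hκm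
  have hsum1 : ∑ ℓ ∈ (Finset.Icc 1 N).erase κ, ρ ℓ = (∑ j ∈ Finset.Icc 1 N, ρ j) - ρ κ := by
    rw [Finset.sum_erase_eq_sub hκ]
  have hsum2 : ∑ ℓ ∈ (Finset.Icc 1 m).erase κ, ρ ℓ = 1 - ρ κ := by
    rw [Finset.sum_erase_eq_sub hκm, hρsum]
  have hnn1 : (0:ℝ) ≤ (∑ j ∈ Finset.Icc 1 N, ρ j) - ρ κ := by
    rw [← hsum1]
    exact Finset.sum_nonneg fun ℓ hℓ => hρ ℓ ((hTsub κ) (by simp [hT, hℓ]))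
  have hnn2 : (0:ℝ) ≤ 1 - ρ κ := by
    rw [← hsum2]
    exact Finset.sum_nonneg fun ℓ hℓ => hρ ℓ (Finset.erase_subset _ _ hℓ)
  rw [← Finset.mul_prod_erase _ _ hκ]
  have h1 : T κ = (Finset.Icc 1 N).erase κ := by simp [hT]
  have h2 : ∀ μ ∈ (Finset.Icc 1 N).erase κ, ENNReal.ofReal (∑ ℓ ∈ T μ, ρ ℓ)
      = ENNReal.ofReal (1 - ρ κ) := by
    intro μ hμ
    have : T μ = (Finset.Icc 1 m).erase κ := by simp [hT, (Finset.mem_erase.mp hμ).1]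
    rw [this, hsum2]
  rw [Finset.prod_congr rfl h2, Finset.prod_const, h1, hsum1]
  have hcard : ((Finset.Icc 1 N).erase κ).card = N - 1 := by
    rw [Finset.card_erase_of_mem hκ, Nat.card_Icc]
    omega
  rw [hcard, ← ENNReal.ofReal_pow hnn2, ← ENNReal.ofReal_mul hnn1,
    ENNReal.toReal_ofReal (mul_nonneg hnn1 (pow_nonneg hnn2 _))]
end

section
/- Half-Duplex Transmitter mode probability (Theorem 1, eq. (10)): the probability that a uniformly chosen user's requested content is cached by no user (including itself) while at least one other user requests the content it caches equals (1/N)·Σ_{κ=1}^{N} (1−P_hit)(1−(1−ρ_κ)^{N−1}). Precisely, (1/N)·Σ_{κ=1}^{N} P( X_κ > N and X_μ = κ for some μ ≠ κ ) = (1/N)·Σ_{κ=1}^{N} (1−P_hit)(1−(1−ρ_κ)^{N−1}). -/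
open MeasureTheory ProbabilityTheory Finset

lemma probIn {Ω : Type*} [MeasurableSpace Ω] (P : Measure Ω)
    (m : ℕ) (X : Ω → ℕ) (ρ : ℕ → ℝ) (hmeas : Measurable X)
    (hdist : ∀ ℓ ∈ Finset.Icc 1 m, P {ω | X ω = ℓ} = ENNReal.ofReal (ρ ℓ))
    (hρ : ∀ ℓ ∈ Finset.Icc 1 m, 0 ≤ ρ ℓ)
    (S : Finset ℕ) (hS : S ⊆ Finset.Icc 1 m) :
    P {ω | X ω ∈ S} = ENNReal.ofReal (∑ ℓ ∈ S, ρ ℓ) := by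
  have hset : {ω | X ω ∈ S} = ⋃ ℓ ∈ S, {ω | X ω = ℓ} := by
    ext ω; simp
  rw [hset, measure_biUnion_finset]
  · rw [Finset.sum_congr rfl (fun ℓ hℓ => hdist ℓ (hS hℓ))]
    exact (ENNReal.ofReal_sum_of_nonneg (fun ℓ hℓ => hρ ℓ (hS hℓ))).symm
  · intro a ha b hb hab
    simp only [Set.disjoint_left, Set.mem_setOf_eq]
    intro ω h1 h2
    exact hab (h1 ▸ h2 ▸ rfl)
  · intro ℓ _
    exact hmeas (MeasurableSet.of_discrete (s := {ℓ}))

/-- Theorem 1, eq. (10): Half-Duplex Transmitter mode probability. -/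
theorem HDTX_mode_probability
    {Ω : Type*} [MeasurableSpace Ω] (P : Measure Ω) [IsProbabilityMeasure P]
    (N m : ℕ) (hN : 1 ≤ N) (hm : N ≤ m)
    (X : ℕ → Ω → ℕ) (ρ : ℕ → ℝ)
    (hmeas : ∀ μ, Measurable (X μ))
    (hrange : ∀ μ ∈ Finset.Icc 1 N, ∀ ω, X μ ω ∈ Finset.Icc 1 m)
    (hindep : iIndepFun
      (fun i : Fin N => X (i.val + 1)) P)
    (hdist : ∀ μ ∈ Finset.Icc 1 N, ∀ ℓ ∈ Finset.Icc 1 m,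
      P {ω | X μ ω = ℓ} = ENNReal.ofReal (ρ ℓ))
    (hρ : ∀ ℓ ∈ Finset.Icc 1 m, 0 ≤ ρ ℓ)
    (hρsum : ∑ ℓ ∈ Finset.Icc 1 m, ρ ℓ = 1) :
    (1 / N : ℝ) * ∑ κ ∈ Finset.Icc 1 N,
        (P {ω | N < X κ ω ∧ (∃ μ ∈ Finset.Icc 1 N, μ ≠ κ ∧ X μ ω = κ)}).toReal
      = (1 / N : ℝ) * ∑ κ ∈ Finset.Icc 1 N, (1 - (∑ j ∈ Finset.Icc 1 N, ρ j)) * (1 - (1 - ρ κ) ^ (N - 1)) := by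
  have hPhit_le : (∑ j ∈ Finset.Icc 1 N, ρ j) ≤ 1 := by
    rw [← hρsum]
    exact Finset.sum_le_sum_of_subset_of_nonneg
      (Finset.Icc_subset_Icc_right hm) (fun ℓ hℓ _ => hρ ℓ hℓ)
  congr 1
  apply Finset.sum_congr rfl
  intro κ hκ
  obtain ⟨hκ1, hκN⟩ := Finset.mem_Icc.mp hκ
  have hκm : κ ∈ Finset.Icc 1 m := Finset.mem_Icc.mpr ⟨hκ1, hκN.trans hm⟩
  have hρκ_nonneg : 0 ≤ ρ κ := hρ κ hκm
  have hρκ_le : ρ κ ≤ 1 := by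
    rw [← hρsum]
    exact Finset.single_le_sum (fun ℓ hℓ => hρ ℓ hℓ) hκm
  set Phit : ℝ := ∑ j ∈ Finset.Icc 1 N, ρ j with hPhit
  have hPhit_nonneg : 0 ≤ Phit := Finset.sum_nonneg
    (fun ℓ hℓ => hρ ℓ (Finset.Icc_subset_Icc_right hm hℓ))
  set A : Set Ω := {ω | N < X κ ω} with hA
  set i₀ : Fin N := ⟨κ - 1, by omega⟩ with hi₀
  have hi₀v : i₀.val + 1 = κ := by simp [hi₀]; omega
  set C : Set Ω := ⋂ i ∈ Finset.univ.erase i₀, {ω | X (i.val + 1) ω ≠ κ} with hC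
  -- P A
  have hPA : P A = ENNReal.ofReal (1 - Phit) := by
    have hsub : Finset.Ioc N m ⊆ Finset.Icc 1 m := by
      intro ℓ hℓ
      rw [Finset.mem_Ioc] at hℓ
      exact Finset.mem_Icc.mpr ⟨by omega, hℓ.2⟩
    have hAeq : A = {ω | X κ ω ∈ Finset.Ioc N m} := by
      ext ω
      have := Finset.mem_Icc.mp (hrange κ hκ ω)
      simp only [hA, Set.mem_setOf_eq, Finset.mem_Ioc]
      exact ⟨fun h => ⟨h, this.2⟩, fun h => h.1⟩
    rw [hAeq, probIn P m (X κ) ρ (hmeas κ) (hdist κ hκ) hρ _ hsub]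
    congr 1
    have hsplit : (∑ ℓ ∈ Finset.Ioc 0 N, ρ ℓ) + ∑ ℓ ∈ Finset.Ioc N m, ρ ℓ
        = ∑ ℓ ∈ Finset.Ioc 0 m, ρ ℓ :=
      Finset.sum_Ioc_consecutive _ (Nat.zero_le N) hm
    have e1 : Finset.Ioc 0 N = Finset.Icc 1 N := by ext x; simp; omega
    have e2 : Finset.Ioc 0 m = Finset.Icc 1 m := by ext x; simp; omega
    rw [e1, e2, hρsum] at hsplit
    linarith
  -- P of individual avoidance
  have hPne : ∀ μ ∈ Finset.Icc 1 N, P {ω | X μ ω ≠ κ} = ENNReal.ofReal (1 - ρ κ) := by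
    intro μ hμ
    have hsub : (Finset.Icc 1 m).erase κ ⊆ Finset.Icc 1 m := Finset.erase_subset _ _
    have heq : {ω | X μ ω ≠ κ} = {ω | X μ ω ∈ (Finset.Icc 1 m).erase κ} := by
      ext ω
      simp only [Set.mem_setOf_eq, Finset.mem_erase]
      exact ⟨fun h => ⟨h, hrange μ hμ ω⟩, fun h => h.1⟩
    rw [heq, probIn P m (X μ) ρ (hmeas μ) (hdist μ hμ) hρ _ hsub]
    congr 1
    rw [Finset.sum_erase_eq_sub hκm, hρsum]
  -- independence computation
  set s : Fin N → Set Ω := fun i => if i = i₀ then A else {ω | X (i.val + 1) ω ≠ κ} with hs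
  have hsplit : (⋂ i, s i) = A ∩ C := by
    ext ω
    simp only [Set.mem_iInter, Set.mem_inter_iff, hC, Set.mem_setOf_eq]
    constructor
    · intro h
      refine ⟨by have := h i₀; simpa [hs] using this, ?_⟩
      intro i hi
      have hne := Finset.ne_of_mem_erase hi
      have := h i
      simp only [hs] at this
      rwa [if_neg hne] at this
    · rintro ⟨hAω, hCω⟩ i
      by_cases hh : i = i₀
      · simp only [hs, if_pos hh]; exact hAω
      · simp only [hs, if_neg hh]
        exact hCω i (Finset.mem_erase.mpr ⟨hh, Finset.mem_univ i⟩)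
  have hindep' : P (⋂ i, s i) = ∏ i, P (s i) := by
    apply hindep.meas_iInter
    intro i
    by_cases hh : i = i₀
    · refine ⟨{n | N < n}, MeasurableSet.of_discrete, ?_⟩
      simp only [hs, if_pos hh]
      subst hh
      ext ω; simp [hA, hi₀v]
    · refine ⟨{κ}ᶜ, MeasurableSet.of_discrete, ?_⟩
      simp only [hs, if_neg hh]
      ext ω; simp
  have hprod : ∏ i, P (s i) = ENNReal.ofReal (1 - Phit) * ENNReal.ofReal (1 - ρ κ) ^ (N - 1) := by
    rw [← Finset.mul_prod_erase Finset.univ _ (Finset.mem_univ i₀)]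
    have h1 : P (s i₀) = ENNReal.ofReal (1 - Phit) := by
      simp only [hs, if_pos rfl]; exact hPA
    have h2 : ∀ i ∈ Finset.univ.erase i₀, P (s i) = ENNReal.ofReal (1 - ρ κ) := by
      intro i hi
      simp only [hs, if_neg (Finset.ne_of_mem_erase hi)]
      exact hPne (i.val + 1) (Finset.mem_Icc.mpr ⟨by omega, by omega⟩)
    rw [h1, Finset.prod_congr rfl h2, Finset.prod_const,
      Finset.card_erase_of_mem (Finset.mem_univ i₀), Finset.card_univ, Fintype.card_fin]
  have hPAC : P (A ∩ C) = ENNReal.ofReal (1 - Phit) * ENNReal.ofReal (1 - ρ κ) ^ (N - 1) := by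
    rw [← hsplit, hindep', hprod]
  have hCmem : ∀ ω, ω ∈ C ↔ ∀ i ∈ Finset.univ.erase i₀, X (i.val + 1) ω ≠ κ := by
    intro ω; simp [hC]
  have hTeq : {ω | N < X κ ω ∧ (∃ μ ∈ Finset.Icc 1 N, μ ≠ κ ∧ X μ ω = κ)} = A \ C := by
    ext ω
    simp only [Set.mem_setOf_eq, Set.mem_diff, hA]
    refine and_congr_right fun _ => ?_
    rw [hCmem ω]
    constructor
    · rintro ⟨μ, hμ, hne, heq⟩ hall
      obtain ⟨hμ1, hμN⟩ := Finset.mem_Icc.mp hμ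
      have hmemE : (⟨μ - 1, by omega⟩ : Fin N) ∈ Finset.univ.erase i₀ := by
        refine Finset.mem_erase.mpr ⟨?_, Finset.mem_univ _⟩
        intro hcontra
        apply hne
        have := Fin.mk.inj_iff.mp hcontra
        omega
      have hx := hall _ hmemE
      apply hx
      have hμ1' : μ - 1 + 1 = μ := by omega
      rw [hμ1', heq]
    · intro h
      by_contra h'
      push_neg at h'
      apply h
      intro i hi
      have hne : i ≠ i₀ := Finset.ne_of_mem_erase hi
      have hμmem : i.val + 1 ∈ Finset.Icc 1 N := Finset.mem_Icc.mpr ⟨by omega, by omega⟩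
      have hneκ : i.val + 1 ≠ κ := fun hcontra => hne (Fin.ext (by omega))
      exact h' (i.val + 1) hμmem hneκ
  have hAmeas : MeasurableSet A := hmeas κ (MeasurableSet.of_discrete (s := {n | N < n}))
  have hCmeas : MeasurableSet C := by
    rw [hC]
    exact Finset.measurableSet_biInter _ (fun i _ =>
      hmeas (i.val + 1) (MeasurableSet.of_discrete (s := {κ}ᶜ)))
  have hkey : P (A ∩ C) + P (A \ C) = P A := measure_inter_add_diff A hCmeas
  rw [hTeq]
  have hfin1 : P (A ∩ C) ≠ ⊤ := measure_ne_top P _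
  have hfin2 : P (A \ C) ≠ ⊤ := measure_ne_top P _
  have hkey' : (P (A ∩ C)).toReal + (P (A \ C)).toReal = (P A).toReal := by
    rw [← ENNReal.toReal_add hfin1 hfin2, hkey]
  have hv1 : (P A).toReal = 1 - Phit := by
    rw [hPA, ENNReal.toReal_ofReal (by linarith)]
  have hv2 : (P (A ∩ C)).toReal = (1 - Phit) * (1 - ρ κ) ^ (N - 1) := by
    rw [hPAC, ENNReal.toReal_mul, ENNReal.toReal_pow,
      ENNReal.toReal_ofReal (by linarith), ENNReal.toReal_ofReal (by linarith)]
  have := hkey'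
  rw [hv1, hv2] at this
  linarith [this, sq_nonneg ((1:ℝ))]
end

section
/- Lemma 1 (distance distribution from a uniform point in a disk): let Y be uniformly distributed on the closed disk of radius R > 0 centered at the origin in ℝ², and let x ∈ ℝ² with ‖x‖ = q, 0 < q ≤ R. Then the law of the random distance Z = ‖Y − x‖ is absolutely continuous with respect to Lebesgue measure on ℝ, with density f(z) = 2z/R² for 0 ≤ z ≤ R − q, f(z) = (2z/(πR²))·arccos( (z² + q² − R²)/(2qz) ) for R − q < z ≤ R + q, and f(z) = 0 otherwise. -/
open MeasureTheory Metric

namespace DistancePdfAux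

open Set Real

set_option maxHeartbeats 1000000

lemma cos_set_eq (c : ℝ) :
    (Ioo (-π) π ∩ {θ | Real.cos θ ≤ c})
      = Ioc (-π) (-Real.arccos c) ∪ Ico (Real.arccos c) π := by
  set a := Real.arccos c with ha
  have ha0 : 0 ≤ a := Real.arccos_nonneg c
  have hapi : a ≤ π := Real.arccos_le_pi c
  have hkey : ∀ t : ℝ, 0 ≤ t → t < π → Real.cos t ≤ c → a ≤ t := by
    intro t ht0 htpi htc
    have h1 : Real.arcsin (Real.cos t) ≤ Real.arcsin c := Real.monotone_arcsin htc
    have h2 : Real.arccos c ≤ Real.arccos (Real.cos t) := by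
      rw [Real.arccos_eq_pi_div_two_sub_arcsin, Real.arccos_eq_pi_div_two_sub_arcsin]; linarith
    rwa [Real.arccos_cos ht0 htpi.le] at h2
  have hkey2 : ∀ t : ℝ, 0 ≤ t → t < π → a ≤ t → Real.cos t ≤ c := by
    intro t ht0 htpi hat
    rcases le_or_gt 1 c with hc | hc
    · exact le_trans (Real.cos_le_one t) hc
    rcases le_or_gt c (-1) with hcle | hcgt
    · exfalso
      have : a = π := Real.arccos_eq_pi.mpr hcle
      linarith
    · have h3 : Real.cos t ≤ Real.cos a :=
        Real.cos_le_cos_of_nonneg_of_le_pi ha0 htpi.le hat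
      rwa [Real.cos_arccos hcgt.le hc.le] at h3
  ext θ
  simp only [mem_inter_iff, mem_setOf_eq, mem_Ioo, mem_union, mem_Ioc, mem_Ico]
  constructor
  · rintro ⟨⟨h1, h2⟩, hc⟩
    rcases le_or_gt 0 θ with hθ | hθ
    · exact Or.inr ⟨hkey θ hθ h2 hc, h2⟩
    · refine Or.inl ⟨h1, ?_⟩
      have := hkey (-θ) (by linarith) (by linarith) (by rwa [Real.cos_neg])
      linarith
  · rintro (⟨h1, h2⟩ | ⟨h1, h2⟩)
    · have h3 : -θ < π := by by_contra h; push_neg at h; nlinarith [Real.pi_pos]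
      refine ⟨⟨h1, by nlinarith [Real.pi_pos]⟩, ?_⟩
      rw [← Real.cos_neg]
      exact hkey2 (-θ) (by linarith) (by linarith) (by linarith)
    · exact ⟨⟨by nlinarith [Real.pi_pos], h2⟩, hkey2 θ (by linarith) h2 h1⟩

lemma cos_measure (c : ℝ) :
    volume (Ioo (-π) π ∩ {θ | Real.cos θ ≤ c})
      = ENNReal.ofReal (2 * Real.arccos (-c)) := by
  rw [cos_set_eq c]
  set a := Real.arccos c with ha
  have ha0 : 0 ≤ a := Real.arccos_nonneg c
  have hapi : a ≤ π := Real.arccos_le_pi c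
  have hdisj : volume (Ioc (-π) (-a) ∩ Ico a π) = 0 := by
    refine measure_mono_null ?_ (measure_singleton (0:ℝ))
    rintro x ⟨⟨_, hx1⟩, hx2, _⟩
    have : a = 0 := by linarith
    simp only [mem_singleton_iff]; linarith
  rw [measure_union₀' (measurableSet_Ioc.nullMeasurableSet) hdisj]
  rw [Real.volume_Ioc, Real.volume_Ico, Real.arccos_neg,
    ← ENNReal.ofReal_add (by linarith) (by linarith)]
  ring_nf
  congr 1; rw [ha]; ring

lemma polar_area (R q z : ℝ) (hR : 0 < R) (hq0 : 0 < q) (hz : 0 ≤ z) :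
    volume {p : ℝ × ℝ | p.1 ^ 2 + p.2 ^ 2 ≤ z ^ 2 ∧ (p.1 + q) ^ 2 + p.2 ^ 2 ≤ R ^ 2}
      = ENNReal.ofReal (∫ r in Ioc 0 z,
          2 * r * Real.arccos ((r ^ 2 + q ^ 2 - R ^ 2) / (2 * q * r))) := by
  set T : Set (ℝ × ℝ) :=
    {p | p.1 ^ 2 + p.2 ^ 2 ≤ z ^ 2 ∧ (p.1 + q) ^ 2 + p.2 ^ 2 ≤ R ^ 2} with hT
  have h1m : MeasurableSet {p : ℝ × ℝ | p.1 ^ 2 + p.2 ^ 2 ≤ z ^ 2} :=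
    measurableSet_le (by measurability) measurable_const
  have h2m : MeasurableSet {p : ℝ × ℝ | (p.1 + q) ^ 2 + p.2 ^ 2 ≤ R ^ 2} :=
    measurableSet_le (by measurability) measurable_const
  have hTmeas : MeasurableSet T := h1m.inter h2m
  have hTsub : T ⊆ Icc (-z) z ×ˢ Icc (-z) z := by
    rintro ⟨p1, p2⟩ ⟨h1, _⟩
    constructor
    · constructor <;> nlinarith [sq_nonneg p1, sq_nonneg p2]
    · constructor <;> nlinarith [sq_nonneg p1, sq_nonneg p2]
  have hTfin : volume T ≠ ⊤ := by
    refine (lt_of_le_of_lt (measure_mono hTsub) ?_).ne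
    rw [Measure.volume_eq_prod, Measure.prod_prod]
    exact ENNReal.mul_lt_top (measure_Icc_lt_top) (measure_Icc_lt_top)
  -- the function after polar change of variables
  have hsymm_meas : Measurable (polarCoord.symm : ℝ × ℝ → ℝ × ℝ) := by
    have : Continuous (fun p : ℝ × ℝ => (p.1 * Real.cos p.2, p.1 * Real.sin p.2)) := by
      fun_prop
    exact this.measurable
  set F : ℝ × ℝ → ℝ := fun p => p.1 * T.indicator 1 (polarCoord.symm p) with hF
  have hFmeas : Measurable F :=
    measurable_fst.mul ((measurable_const.indicator hTmeas).comp hsymm_meas)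
  set S : Set (ℝ × ℝ) := Ioc 0 z ×ˢ Ioo (-π) π with hS
  have hSmeas : MeasurableSet S := measurableSet_Ioc.prod measurableSet_Ioo
  have hr2 : ∀ r θ : ℝ, (r * Real.cos θ) ^ 2 + (r * Real.sin θ) ^ 2 = r ^ 2 := by
    intro r θ
    have := Real.sin_sq_add_cos_sq θ
    nlinarith
  have hstep1 : (volume T).toReal = ∫ p in S, F p := by
    rw [← measureReal_def, ← integral_indicator_one hTmeas, ← integral_comp_polarCoord_symm]
    rw [← integral_indicator polarCoord.open_target.measurableSet,
      ← integral_indicator hSmeas]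
    congr 1
    funext p
    by_cases hp : p ∈ S
    · have hp' : p ∈ polarCoord.target := by
        rcases hp with ⟨h1, h2⟩
        exact ⟨h1.1, h2⟩
      rw [indicator_of_mem hp', indicator_of_mem hp]
      rfl
    · rw [indicator_of_notMem hp]
      by_cases hp' : p ∈ polarCoord.target
      · rw [indicator_of_mem hp']
        have hz' : z < p.1 := by
          rcases hp' with ⟨h1, h2⟩
          by_contra h
          push_neg at h
          exact hp ⟨⟨h1, h⟩, h2⟩
        have : polarCoord.symm p ∉ T := by
          rw [polarCoord_symm_apply]
          intro hmem
          have := hmem.1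
          simp only at this
          rw [hr2 p.1 p.2] at this
          have h1 : (0:ℝ) < p.1 := hp'.1
          nlinarith
        show p.1 • T.indicator 1 (polarCoord.symm p) = 0
        rw [indicator_of_notMem this, smul_zero]
      · rw [indicator_of_notMem hp']
  have hSfin : volume S ≠ ⊤ := by
    rw [Measure.volume_eq_prod, hS, Measure.prod_prod]
    exact (ENNReal.mul_lt_top measure_Ioc_lt_top measure_Ioo_lt_top).ne
  have hFint : IntegrableOn F S := by
    apply Measure.integrableOn_of_bounded hSfin hFmeas.aestronglyMeasurable (M := z)
    rw [ae_restrict_iff' hSmeas]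
    filter_upwards with p hp
    rcases hp with ⟨⟨h1, h2⟩, _⟩
    rw [hF]
    simp only [Real.norm_eq_abs, abs_mul]
    calc |p.1| * |T.indicator 1 (polarCoord.symm p)| ≤ |p.1| * 1 := by
          apply mul_le_mul_of_nonneg_left _ (abs_nonneg _)
          by_cases h : polarCoord.symm p ∈ T
          · rw [indicator_of_mem h]; norm_num
          · rw [indicator_of_notMem h]; norm_num
      _ = |p.1| := mul_one _
      _ ≤ z := by rw [abs_of_pos h1]; exact h2
  have hstep2 : ∫ p in S, F p
      = ∫ r in Ioc 0 z, ∫ θ in Ioo (-π) π, F (r, θ) := by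
    rw [hS, Measure.volume_eq_prod, setIntegral_prod]
    rwa [← Measure.volume_eq_prod, ← hS]
  have hstep3 : ∫ r in Ioc 0 z, ∫ θ in Ioo (-π) π, F (r, θ)
      = ∫ r in Ioc 0 z, 2 * r * Real.arccos ((r ^ 2 + q ^ 2 - R ^ 2) / (2 * q * r)) := by
    apply setIntegral_congr_fun measurableSet_Ioc
    intro r hr
    rcases hr with ⟨hr0, hrz⟩
    dsimp only
    set c : ℝ := (R ^ 2 - q ^ 2 - r ^ 2) / (2 * q * r) with hc
    have h2qr : (0:ℝ) < 2 * q * r := by positivity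
    have hind : ∀ θ : ℝ, T.indicator 1 (polarCoord.symm (r, θ))
        = ({θ' : ℝ | Real.cos θ' ≤ c}).indicator (1 : ℝ → ℝ) θ := by
      intro θ
      have hmem : polarCoord.symm (r, θ) ∈ T ↔ Real.cos θ ≤ c := by
        rw [polarCoord_symm_apply]
        simp only [hT, mem_setOf_eq]
        constructor
        · rintro ⟨-, h2⟩
          rw [hc, le_div_iff₀ h2qr]
          nlinarith [hr2 r θ]
        · intro h
          rw [hc, le_div_iff₀ h2qr] at h
          refine ⟨by rw [hr2 r θ]; nlinarith, ?_⟩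
          nlinarith [hr2 r θ]
      by_cases h : Real.cos θ ≤ c
      · rw [indicator_of_mem (hmem.mpr h),
          indicator_of_mem (show θ ∈ {θ' : ℝ | Real.cos θ' ≤ c} from h)]
        rfl
      · rw [indicator_of_notMem (fun hh => h (hmem.mp hh)),
          indicator_of_notMem (show θ ∉ {θ' : ℝ | Real.cos θ' ≤ c} from h)]
    have hinner : ∫ θ in Ioo (-π) π, F (r, θ)
        = r * (volume (Ioo (-π) π ∩ {θ | Real.cos θ ≤ c})).toReal := by
      simp only [hF]
      rw [integral_const_mul]
      congr 1
      have hcm : MeasurableSet {θ' : ℝ | Real.cos θ' ≤ c} :=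
        measurableSet_le (by measurability) measurable_const
      calc ∫ θ in Ioo (-π) π, T.indicator 1 (polarCoord.symm (r, θ))
          = ∫ θ in Ioo (-π) π, ({θ' : ℝ | Real.cos θ' ≤ c}).indicator (1 : ℝ → ℝ) θ := by
            exact setIntegral_congr_fun measurableSet_Ioo (fun θ _ => hind θ)
        _ = ∫ θ, (Ioo (-π) π).indicator
              (({θ' : ℝ | Real.cos θ' ≤ c}).indicator (1 : ℝ → ℝ)) θ := by
            rw [integral_indicator measurableSet_Ioo]
        _ = ∫ θ, ((Ioo (-π) π ∩ {θ' | Real.cos θ' ≤ c})).indicator (1 : ℝ → ℝ) θ := by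
            rw [indicator_indicator]
        _ = (volume (Ioo (-π) π ∩ {θ | Real.cos θ ≤ c})).toReal := by
            exact integral_indicator_one (measurableSet_Ioo.inter hcm)
    rw [hinner, cos_measure c, ENNReal.toReal_ofReal (mul_nonneg (by norm_num) (Real.arccos_nonneg _))]
    have hneg : -c = (r ^ 2 + q ^ 2 - R ^ 2) / (2 * q * r) := by
      rw [hc, ← neg_div]
      ring_nf
    rw [hneg]
    ring
  have hpos : 0 ≤ ∫ r in Ioc 0 z,
      2 * r * Real.arccos ((r ^ 2 + q ^ 2 - R ^ 2) / (2 * q * r)) := by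
    apply setIntegral_nonneg measurableSet_Ioc
    intro r hr
    have : 0 ≤ Real.arccos ((r ^ 2 + q ^ 2 - R ^ 2) / (2 * q * r)) := Real.arccos_nonneg _
    nlinarith [hr.1]
  rw [← hstep3, ← hstep2, ← hstep1, ENNReal.ofReal_toReal hTfin]

lemma euclid_vol (R q z : ℝ) (hR : 0 < R) (hz : 0 ≤ z)
    (x : EuclideanSpace ℝ (Fin 2)) (hq : ‖x‖ = q) (hq0 : 0 < q) :
    volume (closedBall x z ∩ closedBall 0 R)
      = volume {p : ℝ × ℝ | p.1 ^ 2 + p.2 ^ 2 ≤ z ^ 2 ∧ (p.1 + q) ^ 2 + p.2 ^ 2 ≤ R ^ 2} := by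
  set y : EuclideanSpace ℝ (Fin 2) := EuclideanSpace.single 0 q with hy
  have hyn : ‖y‖ = q := by
    rw [hy, EuclideanSpace.norm_single, Real.norm_eq_abs, abs_of_pos hq0]
  -- rotation
  have hnorm : ‖y‖ = ‖x‖ := by rw [hyn, hq]
  set L : EuclideanSpace ℝ (Fin 2) ≃ₗᵢ[ℝ] EuclideanSpace ℝ (Fin 2) := Submodule.reflection (ℝ ∙ (y - x))ᗮ with hL
  have hLy : L y = x := Submodule.reflection_sub hnorm
  have hrot : volume (closedBall x z ∩ closedBall 0 R)
      = volume (closedBall y z ∩ closedBall 0 R) := by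
    rw [← (L.measurePreserving).measure_preimage
      ((measurableSet_closedBall.inter measurableSet_closedBall).nullMeasurableSet)]
    congr 1
    ext p
    simp only [mem_inter_iff, mem_preimage, mem_closedBall, dist_eq_norm, sub_zero]
    constructor
    · rintro ⟨h1, h2⟩
      constructor
      · have h3 : ‖L p - L y‖ ≤ z := by rw [hLy]; exact h1
        rwa [← L.map_sub, L.norm_map] at h3
      · rwa [L.norm_map] at h2
    · rintro ⟨h1, h2⟩
      constructor
      · rw [← hLy, ← L.map_sub, L.norm_map]; exact h1
      · rwa [L.norm_map]
  -- coordinates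
  set f : ℝ × ℝ → EuclideanSpace ℝ (Fin 2) := fun p =>
    (MeasurableEquiv.toLp 2 (Fin 2 → ℝ))
      ((MeasurableEquiv.piFinTwo (fun _ => ℝ)).symm p) with hf
  have hfmp : MeasurePreserving f :=
    (PiLp.volume_preserving_toLp (Fin 2)).comp
      ((volume_preserving_piFinTwo (fun _ => ℝ)).symm _)
  have hfcoord : ∀ (p : ℝ × ℝ) (i : Fin 2), f p i = if i = 0 then p.1 else p.2 := by
    intro p i
    fin_cases i <;> rfl
  have hfnorm : ∀ p : ℝ × ℝ, ‖f p‖ = Real.sqrt (p.1 ^ 2 + p.2 ^ 2) := by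
    intro p
    rw [EuclideanSpace.norm_eq]
    congr 1
    rw [Fin.sum_univ_two, hfcoord p 0, hfcoord p 1]
    norm_num [sq_abs]
  have hcoords : volume (closedBall y z ∩ closedBall 0 R)
      = volume {p : ℝ × ℝ | (p.1 - q) ^ 2 + p.2 ^ 2 ≤ z ^ 2 ∧ p.1 ^ 2 + p.2 ^ 2 ≤ R ^ 2} := by
    rw [← hfmp.measure_preimage
      ((measurableSet_closedBall.inter measurableSet_closedBall).nullMeasurableSet)]
    congr 1
    ext p
    simp only [mem_inter_iff, mem_preimage, mem_closedBall, dist_eq_norm, sub_zero,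
      mem_setOf_eq]
    have h1 : ‖f p - y‖ = Real.sqrt ((p.1 - q) ^ 2 + p.2 ^ 2) := by
      rw [EuclideanSpace.norm_eq]
      congr 1
      rw [Fin.sum_univ_two]
      have e0 : (f p - y) 0 = p.1 - q := by
        rw [PiLp.sub_apply, hfcoord p 0, hy]
        simp [EuclideanSpace.single_apply]
      have e1 : (f p - y) 1 = p.2 := by
        rw [PiLp.sub_apply, hfcoord p 1, hy]
        simp [EuclideanSpace.single_apply]
      rw [e0, e1]
      norm_num [sq_abs]
    rw [h1, hfnorm p, Real.sqrt_le_iff, Real.sqrt_le_iff]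
    constructor
    · rintro ⟨⟨_, a⟩, ⟨_, b⟩⟩; exact ⟨a, b⟩
    · rintro ⟨a, b⟩
      exact ⟨⟨hz, a⟩, ⟨hR.le, b⟩⟩
  -- translation in ℝ × ℝ
  have htrans : volume {p : ℝ × ℝ | (p.1 - q) ^ 2 + p.2 ^ 2 ≤ z ^ 2 ∧ p.1 ^ 2 + p.2 ^ 2 ≤ R ^ 2}
      = volume {p : ℝ × ℝ | p.1 ^ 2 + p.2 ^ 2 ≤ z ^ 2 ∧ (p.1 + q) ^ 2 + p.2 ^ 2 ≤ R ^ 2} := by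
    have hmp : MeasurePreserving (fun p : ℝ × ℝ => p + (q, 0)) volume volume :=
      measurePreserving_add_right volume (q, 0)
    have hmeas : MeasurableSet
        {p : ℝ × ℝ | (p.1 - q) ^ 2 + p.2 ^ 2 ≤ z ^ 2 ∧ p.1 ^ 2 + p.2 ^ 2 ≤ R ^ 2} := by
      exact (measurableSet_le
          (((measurable_fst.sub measurable_const).pow_const 2).add
            (measurable_snd.pow_const 2)) measurable_const).inter
        (measurableSet_le
          ((measurable_fst.pow_const 2).add (measurable_snd.pow_const 2)) measurable_const)
    rw [← hmp.measure_preimage hmeas.nullMeasurableSet]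
    congr 1
    ext p
    simp only [mem_preimage, mem_setOf_eq, Prod.fst_add, Prod.snd_add]
    norm_num
  rw [hrot, hcoords, htrans]

end DistancePdfAux

open Set in
set_option maxHeartbeats 1000000 in
/-- Lemma 1: if `Y` is uniform on the closed disk of radius `R > 0` centered at the origin
of `ℝ²` and `‖x‖ = q` with `0 < q ≤ R`, then the law of `Z = ‖Y − x‖` has density (w.r.t.
Lebesgue measure on `ℝ`) `2z/R²` on `[0, R − q]`,
`(2z/(πR²))·arccos((z² + q² − R²)/(2qz))` on `(R − q, R + q]`, and `0` otherwise. -/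
theorem distance_pdf_uniform_disk
    {Ω : Type*} [MeasurableSpace Ω] (P : Measure Ω) [IsProbabilityMeasure P]
    (R : ℝ) (hR : 0 < R)
    (Y : Ω → EuclideanSpace ℝ (Fin 2)) (hmeas_Y : Measurable Y)
    (hY : Measure.map Y P
      = (ENNReal.ofReal (Real.pi * R ^ 2))⁻¹ • volume.restrict (closedBall 0 R))
    (x : EuclideanSpace ℝ (Fin 2)) (q : ℝ) (hq : ‖x‖ = q) (hq0 : 0 < q) (hqR : q ≤ R) :
    Measure.map (fun ω => ‖Y ω - x‖) P
      = volume.withDensity (fun z => ENNReal.ofReal (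
          if 0 ≤ z ∧ z ≤ R - q then 2 * z / R ^ 2
          else if R - q < z ∧ z ≤ R + q then
            (2 * z / (Real.pi * R ^ 2)) * Real.arccos ((z ^ 2 + q ^ 2 - R ^ 2) / (2 * q * z))
          else 0)) := by
  have hπ : (0:ℝ) < Real.pi := Real.pi_pos
  set fd : ℝ → ℝ := fun z =>
    if 0 ≤ z ∧ z ≤ R - q then 2 * z / R ^ 2
    else if R - q < z ∧ z ≤ R + q then
      (2 * z / (Real.pi * R ^ 2)) * Real.arccos ((z ^ 2 + q ^ 2 - R ^ 2) / (2 * q * z))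
    else 0 with hfd
  have hfd_nonneg : ∀ t, 0 ≤ fd t := by
    intro t
    rw [hfd]
    dsimp only
    split_ifs with h1 h2
    · have := h1.1; positivity
    · have ht : 0 ≤ t := by rcases h2 with ⟨h2a, _⟩; nlinarith
      have := Real.arccos_nonneg ((t ^ 2 + q ^ 2 - R ^ 2) / (2 * q * t))
      positivity
    · exact le_refl 0
  have hfd_meas : Measurable fd := by
    rw [hfd]
    apply Measurable.ite
    · exact (measurableSet_le measurable_const measurable_id).inter
        (measurableSet_le measurable_id measurable_const)
    · exact (measurable_id.const_mul 2).div_const (R ^ 2)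
    apply Measurable.ite
    · exact (measurableSet_lt measurable_const measurable_id).inter
        (measurableSet_le measurable_id measurable_const)
    · exact ((measurable_id.const_mul 2).div_const (Real.pi * R ^ 2)).mul
        (Real.continuous_arccos.measurable.comp
          ((((measurable_id.pow_const 2).add_const (q ^ 2)).sub_const (R ^ 2)).div
            (measurable_id.const_mul (2 * q))))
    · exact measurable_const
  have hfd0 : ∀ t : ℝ, t ≤ 0 → fd t = 0 := by
    intro t ht
    rw [hfd]
    dsimp only
    split_ifs with h1 h2
    · have ht0 : t = 0 := le_antisymm ht h1.1
      rw [ht0]; ring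
    · exfalso; rcases h2 with ⟨h2a, _⟩; linarith
    · rfl
  have hmeasZ : Measurable (fun ω => ‖Y ω - x‖) := (hmeas_Y.sub measurable_const).norm
  haveI : IsProbabilityMeasure (Measure.map (fun ω => ‖Y ω - x‖) P) :=
    Measure.isProbabilityMeasure_map hmeasZ.aemeasurable
  refine Measure.ext_of_Iic _ _ (fun a => ?_)
  have hRHS : volume.withDensity (fun z => ENNReal.ofReal (
          if 0 ≤ z ∧ z ≤ R - q then 2 * z / R ^ 2
          else if R - q < z ∧ z ≤ R + q then
            (2 * z / (Real.pi * R ^ 2)) * Real.arccos ((z ^ 2 + q ^ 2 - R ^ 2) / (2 * q * z))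
          else 0)) (Iic a) = ∫⁻ t in Iic a, ENNReal.ofReal (fd t) := by
    rw [withDensity_apply _ measurableSet_Iic]
  rw [Measure.map_apply hmeasZ measurableSet_Iic, hRHS]
  rcases lt_or_ge a 0 with ha | ha
  · have h1 : (fun ω => ‖Y ω - x‖) ⁻¹' Iic a = ∅ := by
      ext ω
      simp only [mem_preimage, mem_Iic, mem_empty_iff_false, iff_false, not_le]
      have := norm_nonneg (Y ω - x); linarith
    rw [h1, measure_empty]
    have hz : ∀ᵐ t ∂(volume.restrict (Iic a)), ENNReal.ofReal (fd t) = 0 := by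
      rw [ae_restrict_iff' measurableSet_Iic]
      filter_upwards with t ht
      rw [hfd0 t (le_trans ht ha.le), ENNReal.ofReal_zero]
    rw [lintegral_congr_ae hz, lintegral_zero]
  · -- LHS computation
    have hpre : (fun ω => ‖Y ω - x‖) ⁻¹' Iic a = Y ⁻¹' closedBall x a := by
      ext ω
      simp only [mem_preimage, mem_Iic, mem_closedBall, dist_eq_norm]
    rw [hpre, ← Measure.map_apply hmeas_Y measurableSet_closedBall, hY,
      Measure.smul_apply, Measure.restrict_apply measurableSet_closedBall,
      DistancePdfAux.euclid_vol R q a hR ha x hq hq0,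
      DistancePdfAux.polar_area R q a hR hq0 ha]
    -- RHS computation
    have hiic : Iic a = Iic 0 ∪ Ioc 0 a := (Iic_union_Ioc_eq_Iic ha).symm
    rw [hiic, lintegral_union measurableSet_Ioc (Iic_disjoint_Ioc le_rfl)]
    have hz1 : ∫⁻ t in Iic 0, ENNReal.ofReal (fd t) = 0 := by
      have hz : ∀ᵐ t ∂(volume.restrict (Iic (0:ℝ))), ENNReal.ofReal (fd t) = 0 := by
        rw [ae_restrict_iff' measurableSet_Iic]
        filter_upwards with t ht
        rw [hfd0 t ht, ENNReal.ofReal_zero]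
      rw [lintegral_congr_ae hz, lintegral_zero]
    rw [hz1, zero_add]
    have hint : IntegrableOn fd (Ioc 0 a) := by
      apply Measure.integrableOn_of_bounded (M := 2 * a / R ^ 2 * Real.pi)
        measure_Ioc_lt_top.ne hfd_meas.aestronglyMeasurable
      rw [ae_restrict_iff' measurableSet_Ioc]
      filter_upwards with t ht
      rcases ht with ⟨ht0, hta⟩
      rw [Real.norm_eq_abs, abs_of_nonneg (hfd_nonneg t), hfd]
      dsimp only
      have hpi1 : (1:ℝ) ≤ Real.pi := by linarith [Real.pi_gt_three]
      split_ifs with h1 h2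
      · calc 2 * t / R ^ 2 ≤ 2 * a / R ^ 2 := by gcongr
          _ ≤ 2 * a / R ^ 2 * Real.pi := le_mul_of_one_le_right (by positivity) hpi1
      · set A := Real.arccos ((t ^ 2 + q ^ 2 - R ^ 2) / (2 * q * t)) with hA
        have hA0 : 0 ≤ A := Real.arccos_nonneg _
        have hAπ : A ≤ Real.pi := Real.arccos_le_pi _
        calc 2 * t / (Real.pi * R ^ 2) * A ≤ 2 * a / (Real.pi * R ^ 2) * Real.pi := by
              apply mul_le_mul (by gcongr) hAπ hA0 (by positivity)
          _ = 2 * a / R ^ 2 := by field_simp; try ring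
          _ ≤ 2 * a / R ^ 2 * Real.pi := le_mul_of_one_le_right (by positivity) hpi1
      · positivity
    have hlint : ∫⁻ t in Ioc 0 a, ENNReal.ofReal (fd t)
        = ENNReal.ofReal (∫ t in Ioc 0 a, fd t) := by
      rw [← ofReal_integral_eq_lintegral_ofReal hint
        (ae_of_all _ (fun t => hfd_nonneg t))]
    rw [hlint]
    have hkey : ∫ r in Ioc 0 a, 2 * r * Real.arccos ((r ^ 2 + q ^ 2 - R ^ 2) / (2 * q * r))
        = (Real.pi * R ^ 2) * ∫ t in Ioc 0 a, fd t := by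
      rw [← integral_const_mul]
      apply setIntegral_congr_fun measurableSet_Ioc
      intro t ht
      rcases ht with ⟨ht0, hta⟩
      dsimp only
      rw [hfd]
      dsimp only
      have h2qt : (0:ℝ) < 2 * q * t := by positivity
      split_ifs with h1 h2
      · have harg : (t ^ 2 + q ^ 2 - R ^ 2) / (2 * q * t) ≤ -1 := by
          rw [div_le_iff₀ h2qt]
          nlinarith [h1.2]
        rw [Real.arccos_of_le_neg_one harg]
        field_simp
        try ring
      · field_simp
        try ring
      · have ht1 : R + q < t := by
          push_neg at h1 h2
          rcases le_or_gt t (R + q) with hle | hgt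
          · exfalso
            have hgt' : R - q < t := by
              by_contra hcon
              push_neg at hcon
              exact absurd (h1 ht0.le) (not_lt.mpr hcon)
            linarith [h2 hgt']
          · exact hgt
        have harg : (1:ℝ) ≤ (t ^ 2 + q ^ 2 - R ^ 2) / (2 * q * t) := by
          rw [le_div_iff₀ h2qt]
          nlinarith
        rw [Real.arccos_of_one_le harg]
        try ring
    rw [hkey, ENNReal.ofReal_mul (p := Real.pi * R ^ 2) (by positivity), smul_eq_mul, ← mul_assoc,
      ENNReal.inv_mul_cancel
        (ne_of_gt (ENNReal.ofReal_pos.mpr (by positivity))) ENNReal.ofReal_ne_top,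
      one_mul]
end
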